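/- For every k ≥ 3, the code CR_k = {{1},...,{k},{1,2},{2,3},...,{k-1,k},{k,1}} is closed convex realizable in ℝ²: there exist nonempty closed convex sets U_1,...,U_k ⊆ ℝ² (the edges of a regular k-gon, U_i being the edge from vertex i to vertex i+1 mod k) with stimulus space X = ⋃ U_i such that CR_k = C(U). -/

import Mathlib

/-- The code `CR_k` on `k` neurons: all singletons `{i}` for `i ∈ [k]` and all
cyclically consecutive pairs `{i, i+1}` (including `{k,1}`). -/
def cycleCode (k : ℕ) : Set (Finset ℕ) :=
  {s | ∃ i ∈ Finset.Icc 1 k, s = {i}} ∪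
  {s | ∃ i ∈ Finset.Icc 1 k, s = {i, i % k + 1}}

/-- The code of a collection `U` indexed by `{1,…,k}` with stimulus space `X`:
`σ` is a codeword iff some point of `X` lies in exactly the sets `U j` with `j ∈ σ`. -/
def codeOfCoverIn (k : ℕ) (U : ℕ → Set (ℝ × ℝ)) (X : Set (ℝ × ℝ)) : Set (Finset ℕ) :=
  {σ | σ ⊆ Finset.Icc 1 k ∧ ∃ x ∈ X, ∀ j ∈ Finset.Icc 1 k, (x ∈ U j ↔ j ∈ σ)}


open Real

noncomputable def vtx (k m : ℕ) : ℝ × ℝ := (Real.cos (2*π*m/k), Real.sin (2*π*m/k))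

noncomputable def ed (k i : ℕ) : Set (ℝ × ℝ) := segment ℝ (vtx k i) (vtx k (i+1))

noncomputable def ell (k i : ℕ) (x : ℝ × ℝ) : ℝ :=
  x.1 * ((vtx k i).1 + (vtx k (i+1)).1) + x.2 * ((vtx k i).2 + (vtx k (i+1)).2)

lemma vtx_mod (k m : ℕ) (hk : 0 < k) : vtx k m = vtx k (m % k) := by
  have h : 2*π*(m:ℝ)/k = 2*π*((m % k : ℕ):ℝ)/k + (m / k : ℕ) * (2*π) := by
    have hm : (m:ℝ) = ((m % k : ℕ):ℝ) + ((m / k : ℕ):ℝ) * k := by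
      exact_mod_cast (Nat.mod_add_div' m k).symm
    field_simp [hm]
    linarith
  unfold vtx
  rw [h, Real.cos_add_nat_mul_two_pi, Real.sin_add_nat_mul_two_pi]

lemma vtx_congr {k m n : ℕ} (hk : 0 < k) (h : m ≡ n [MOD k]) : vtx k m = vtx k n := by
  rw [vtx_mod k m hk, vtx_mod k n hk, h]

lemma ell_vtx (k : ℕ) (hk : 3 ≤ k) (i m : ℕ) :
    ell k i (vtx k m) = 2 * Real.cos (2*π*((m:ℝ)-i)/k - π/k) * Real.cos (π/k) := by
  have hk0 : (k:ℝ) ≠ 0 := by positivity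
  have h1 : ell k i (vtx k m) =
      Real.cos (2*π*m/k - 2*π*i/k) + Real.cos (2*π*m/k - 2*π*(i+1:ℕ)/k) := by
    unfold ell vtx
    rw [Real.cos_sub, Real.cos_sub]
    ring
  rw [h1, Real.cos_add_cos]
  have h2 : (2*π*m/k - 2*π*i/k + (2*π*m/k - 2*π*(i+1:ℕ)/k)) / 2
      = 2*π*((m:ℝ)-i)/k - π/k := by
    push_cast
    field_simp
    ring
  have h3 : (2*π*m/k - 2*π*i/k - (2*π*m/k - 2*π*(i+1:ℕ)/k)) / 2 = π/k := by
    push_cast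
    field_simp
    ring
  rw [h2, h3]

lemma cos_pik_pos (k : ℕ) (hk : 3 ≤ k) : 0 < Real.cos (π/k) := by
  have hp := Real.pi_pos
  have hk3 : (3:ℝ) ≤ k := by exact_mod_cast hk
  apply Real.cos_pos_of_mem_Ioo
  constructor
  · have : 0 < π/k := by positivity
    linarith
  · have : π/k ≤ π/3 := by
      apply div_le_div_of_nonneg_left (le_of_lt hp) (by norm_num) hk3
    linarith

lemma ell_vtx_le (k : ℕ) (hk : 3 ≤ k) (i m : ℕ) :
    ell k i (vtx k m) ≤ 2 * Real.cos (π/k)^2 ∧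
    (ell k i (vtx k m) = 2 * Real.cos (π/k)^2 ↔ (m ≡ i [MOD k] ∨ m ≡ i+1 [MOD k])) := by
  have hp := Real.pi_pos
  have hkZ : (0:ℤ) < k := by exact_mod_cast Nat.lt_of_lt_of_le (by norm_num) hk
  have hkZ3 : (3:ℤ) ≤ k := by exact_mod_cast hk
  have hkR : (0:ℝ) < k := by exact_mod_cast hkZ
  have hk3 : (3:ℝ) ≤ k := by exact_mod_cast hk
  set e : ℤ := (m:ℤ) - i with he_def
  set d : ℤ := e % k with hd_def
  have hd0 : 0 ≤ d := Int.emod_nonneg e (by omega)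
  have hdk : d < k := Int.emod_lt_of_pos e hkZ
  have he : e = k * (e / k) + d := (Int.mul_ediv_add_emod e k).symm
  obtain ⟨q, hq⟩ : ∃ q : ℤ, e = k * q + d := ⟨e / k, he⟩
  clear_value d
  have hang : 2*π*((m:ℝ)-i)/k - π/k = (2*π*(d:ℝ)/k - π/k) + ((e/k : ℤ):ℝ) * (2*π) := by
    have hme : ((m:ℝ) - i) = (d:ℝ) + ((e/k : ℤ):ℝ) * k := by
      have h4 : ((e:ℤ):ℝ) = (((k:ℤ) * (e / k) + d : ℤ):ℝ) := by rw [← he]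
      push_cast [he_def] at h4
      linarith
    rw [hme]
    field_simp
    ring
  rw [ell_vtx k hk i m, hang, Real.cos_add_int_mul_two_pi]
  have hcpos := cos_pik_pos k hk
  have hmi : (m ≡ i [MOD k]) ↔ d = 0 := by
    rw [Nat.modEq_iff_dvd]
    have h1 : ((i:ℤ) - m) = -e := by rw [he_def]; ring
    rw [h1, dvd_neg]
    constructor
    · intro h; rw [hd_def]; exact Int.emod_eq_zero_of_dvd h
    · intro h; rw [hd_def] at h; exact Int.dvd_of_emod_eq_zero h
  have hmi1 : (m ≡ i+1 [MOD k]) ↔ d = 1 := by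
    rw [Nat.modEq_iff_dvd]
    have h1 : (((i+1 : ℕ):ℤ) - m) = -(e - 1) := by push_cast [he_def]; ring
    rw [h1, dvd_neg]
    constructor
    · intro h
      have h3 : d - 1 = (e - 1) - k * (e/k) := by linarith [he]
      have h2 : (k:ℤ) ∣ (d - 1) := by
        rw [h3]
        exact dvd_sub h (Dvd.intro _ rfl)
      have := Int.eq_zero_of_abs_lt_dvd h2 (by rw [abs_lt]; omega)
      omega
    · intro h
      have h3 : e - 1 = k * (e/k) := by linarith [he]
      exact ⟨e/k, h3⟩
  rw [hmi, hmi1]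
  have harg : 2*π*(d:ℝ)/k - π/k = (2*(d:ℝ)-1)*(π/k) := by
    field_simp
  rw [harg]
  set c : ℝ := π/k with hc_def
  have hc0 : 0 < c := by positivity
  have hckπ : (k:ℝ) * c = π := by rw [hc_def]; field_simp
  have hcπ3 : c ≤ π/3 := by
    rw [hc_def]
    apply div_le_div_of_nonneg_left (le_of_lt hp) (by norm_num) hk3
  have key : Real.cos ((2*(d:ℝ)-1)*c) ≤ Real.cos c ∧
      (Real.cos ((2*(d:ℝ)-1)*c) = Real.cos c ↔ (d = 0 ∨ d = 1)) := by
    rcases eq_or_ne d 0 with rfl | h0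
    · rw [show (2*((0:ℤ):ℝ)-1)*c = -c by push_cast; ring, Real.cos_neg]
      exact ⟨le_refl _, by simp⟩
    rcases eq_or_ne d 1 with rfl | h1
    · rw [show (2*((1:ℤ):ℝ)-1)*c = c by push_cast; ring]
      exact ⟨le_refl _, by simp⟩
    · have hd2 : 2 ≤ d := by omega
      have hd2R : (2:ℝ) ≤ (d:ℝ) := by exact_mod_cast hd2
      have hdkR : (d:ℝ) ≤ (k:ℝ) - 1 := by
        have : d ≤ (k:ℤ) - 1 := by omega
        exact_mod_cast this
      have hα1 : 3*c ≤ (2*(d:ℝ)-1)*c := by nlinarith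
      have hα2 : (2*(d:ℝ)-1)*c ≤ 2*π - 3*c := by nlinarith
      have hlt : Real.cos ((2*(d:ℝ)-1)*c) < Real.cos c := by
        rcases le_or_gt ((2*(d:ℝ)-1)*c) π with hle | hgt
        · exact Real.cos_lt_cos_of_nonneg_of_le_pi (le_of_lt hc0) hle (by linarith)
        · rw [← Real.cos_two_pi_sub]
          exact Real.cos_lt_cos_of_nonneg_of_le_pi (le_of_lt hc0) (by linarith) (by linarith)
      refine ⟨le_of_lt hlt, ?_, ?_⟩
      · intro h; exfalso; linarith
      · intro h; exfalso; rcases h with h | h <;> omega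
  refine ⟨by nlinarith [key.1, hcpos], ?_⟩
  rw [← key.2]
  constructor
  · intro h
    have h2 : (Real.cos ((2*(d:ℝ)-1)*c) - Real.cos c) * Real.cos c = 0 := by
      linear_combination h/2
    rcases mul_eq_zero.mp h2 with h3 | h3
    · linarith
    · exfalso; linarith
  · intro h
    rw [h]
    ring

lemma ell_linear (k i : ℕ) (a b : ℝ) (x y : ℝ × ℝ) :
    ell k i (a • x + b • y) = a * ell k i x + b * ell k i y := by
  unfold ell
  simp only [Prod.fst_add, Prod.snd_add, Prod.smul_fst, Prod.smul_snd, smul_eq_mul]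
  ring

lemma vtx_ne (k : ℕ) (hk : 3 ≤ k) (i : ℕ) : vtx k i ≠ vtx k (i+1) := by
  have hp := Real.pi_pos
  have hkR : (0:ℝ) < k := by exact_mod_cast Nat.lt_of_lt_of_le (by norm_num) hk
  intro h
  have hc : Real.cos (2*π*i/k) = Real.cos (2*π*(i+1:ℕ)/k) := congrArg Prod.fst h
  have hs : Real.sin (2*π*i/k) = Real.sin (2*π*(i+1:ℕ)/k) := congrArg Prod.snd h
  have h1 : Real.cos (2*π*((i+1:ℕ):ℝ)/k - 2*π*i/k) = 1 := by
    rw [Real.cos_sub, ← hc, ← hs]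
    nlinarith [Real.sin_sq_add_cos_sq (2*π*i/k)]
  have h2 : 2*π*((i+1:ℕ):ℝ)/k - 2*π*i/k = 2*π/k := by
    push_cast
    field_simp
    ring
  rw [h2] at h1
  obtain ⟨n, hn⟩ := (Real.cos_eq_one_iff _).mp h1
  have h3 : (n:ℝ) * k * (2*π) = 1 * (2*π) := by
    have : (n:ℝ) * (2*π) * k = 2*π := by
      rw [hn]
      field_simp
    nlinarith [this]
  have h4 : (n:ℝ) * k = 1 := by
    have h2π : (0:ℝ) < 2*π := by linarith
    exact mul_right_cancel₀ (ne_of_gt h2π) h3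
  have h5 : (n:ℤ) * k = 1 := by exact_mod_cast h4
  have h6 : (k:ℤ) ∣ 1 := ⟨n, by linarith [h5]⟩
  have := Int.le_of_dvd (by norm_num) h6
  omega

lemma ell_le_edge (k : ℕ) (hk : 3 ≤ k) (i j : ℕ) {x : ℝ × ℝ} (hx : x ∈ ed k j) :
    ell k i x ≤ 2 * Real.cos (π/k)^2 := by
  obtain ⟨a, b, ha, hb, hab, hx⟩ := hx
  rw [← hx, ell_linear]
  nlinarith [(ell_vtx_le k hk i j).1, (ell_vtx_le k hk i (j+1)).1]

lemma ell_eq_self (k : ℕ) (hk : 3 ≤ k) (i : ℕ) {x : ℝ × ℝ} (hx : x ∈ ed k i) :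
    ell k i x = 2 * Real.cos (π/k)^2 := by
  obtain ⟨a, b, ha, hb, hab, hx⟩ := hx
  rw [← hx, ell_linear]
  rw [(ell_vtx_le k hk i i).2.mpr (Or.inl (Nat.ModEq.refl i)),
    (ell_vtx_le k hk i (i+1)).2.mpr (Or.inr (Nat.ModEq.refl (i+1)))]
  nlinarith

lemma modeq_two_absurd (k : ℕ) (hk : 3 ≤ k) (i : ℕ) (h : i ≡ i + 2 [MOD k]) : False := by
  have h1 := Nat.ModEq.dvd h
  have h2 : ((i+2:ℕ):ℤ) - (i:ℤ) = 2 := by push_cast; ring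
  rw [h2] at h1
  have := Int.le_of_dvd (by norm_num) h1
  omega

lemma edge_inter (k : ℕ) (hk : 3 ≤ k) {i j : ℕ} {x : ℝ × ℝ}
    (hxi : x ∈ ed k i) (hxj : x ∈ ed k j) (hne : ¬ i ≡ j [MOD k]) :
    (j ≡ i + 1 [MOD k] ∧ x = vtx k (i+1)) ∨ (i ≡ j + 1 [MOD k] ∧ x = vtx k i) := by
  have hk0 : 0 < k := by omega
  have hMi : ell k i x = 2 * Real.cos (π/k)^2 := ell_eq_self k hk i hxi
  obtain ⟨a, b, ha, hb, hab, hx⟩ := hxj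
  have hA := (ell_vtx_le k hk i j).1
  have hB := (ell_vtx_le k hk i (j+1)).1
  have hlin : a * ell k i (vtx k j) + b * ell k i (vtx k (j+1)) = 2 * Real.cos (π/k)^2 := by
    rw [← ell_linear, hx, hMi]
  rcases eq_or_lt_of_le ha with ha0 | ha0
  · -- a = 0, x = vtx k (j+1)
    have hb1 : b = 1 := by linarith
    have hxv : x = vtx k (j+1) := by rw [← hx, ← ha0, hb1]; simp
    have hMB : ell k i (vtx k (j+1)) = 2 * Real.cos (π/k)^2 := by
      rw [← ha0, hb1] at hlin; linarith
    rcases (ell_vtx_le k hk i (j+1)).2.mp hMB with h | h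
    · exact Or.inr ⟨h.symm, by rw [hxv, vtx_congr hk0 h]⟩
    · exact absurd (Nat.ModEq.add_right_cancel' 1 h).symm hne
  rcases eq_or_lt_of_le hb with hb0 | hb0
  · -- b = 0, x = vtx k j
    have ha1 : a = 1 := by linarith
    have hxv : x = vtx k j := by rw [← hx, ← hb0, ha1]; simp
    have hMA : ell k i (vtx k j) = 2 * Real.cos (π/k)^2 := by
      rw [← hb0, ha1] at hlin; linarith
    rcases (ell_vtx_le k hk i j).2.mp hMA with h | h
    · exact absurd h.symm hne
    · exact Or.inl ⟨h, by rw [hxv, vtx_congr hk0 h]⟩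
  · -- both positive
    exfalso
    have hMA : ell k i (vtx k j) = 2 * Real.cos (π/k)^2 := by nlinarith
    have hMB : ell k i (vtx k (j+1)) = 2 * Real.cos (π/k)^2 := by nlinarith
    rcases (ell_vtx_le k hk i j).2.mp hMA with h | h
    · exact hne h.symm
    rcases (ell_vtx_le k hk i (j+1)).2.mp hMB with h' | h'
    · exact modeq_two_absurd k hk i (h'.symm.trans (h.add_right 1))
    · exact hne (Nat.ModEq.add_right_cancel' 1 h').symm

lemma ed_closed (k i : ℕ) : IsClosed (ed k i) := by
  rw [ed, segment_eq_image ℝ]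
  exact (isCompact_Icc.image (by fun_prop)).isClosed

lemma mem_Icc_mod_inj {k a b : ℕ} (ha : a ∈ Finset.Icc 1 k) (hb : b ∈ Finset.Icc 1 k)
    (h : a ≡ b [MOD k]) : a = b := by
  rw [Finset.mem_Icc] at ha hb
  have h' : a % k = b % k := h
  rcases eq_or_lt_of_le ha.2 with hak | hak <;> rcases eq_or_lt_of_le hb.2 with hbk | hbk
  · omega
  · rw [hak, Nat.mod_self, Nat.mod_eq_of_lt hbk] at h'; omega
  · rw [hbk, Nat.mod_self, Nat.mod_eq_of_lt hak] at h'; omega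
  · rw [Nat.mod_eq_of_lt hak, Nat.mod_eq_of_lt hbk] at h'; omega

lemma succ_mem_Icc {k i : ℕ} (hk : 3 ≤ k) (_ : i ∈ Finset.Icc 1 k) :
    i % k + 1 ∈ Finset.Icc 1 k := by
  have := Nat.mod_lt i (show 0 < k by omega)
  rw [Finset.mem_Icc]
  omega

lemma succ_modeq (k i : ℕ) : i + 1 ≡ i % k + 1 [MOD k] :=
  (Nat.mod_modEq i k).symm.add_right 1

theorem cycleCode_closed_convex_realizable (k : ℕ) (hk : 3 ≤ k) :
    ∃ U : ℕ → Set (ℝ × ℝ),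
      (∀ i ∈ Finset.Icc 1 k, (U i).Nonempty ∧ IsClosed (U i) ∧ Convex ℝ (U i)) ∧
      codeOfCoverIn k U (⋃ i ∈ Finset.Icc 1 k, U i) = cycleCode k := by
  have hk0 : 0 < k := by omega
  refine ⟨ed k, fun i _ => ⟨⟨vtx k i, left_mem_segment ℝ _ _⟩, ed_closed k i,
    convex_segment _ _⟩, ?_⟩
  ext σ
  constructor
  · rintro ⟨hsub, x, hxX, hmem⟩
    simp only [Set.mem_iUnion, exists_prop] at hxX
    obtain ⟨i, hi, hxi⟩ := hxX
    have hiσ : i ∈ σ := (hmem i hi).mp hxi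
    by_cases hone : ∀ j ∈ σ, j = i
    · exact Or.inl ⟨i, hi, Finset.eq_singleton_iff_unique_mem.mpr ⟨hiσ, hone⟩⟩
    · push_neg at hone
      obtain ⟨j, hjσ, hji⟩ := hone
      right
      have hjI := hsub hjσ
      have hxj : x ∈ ed k j := (hmem j hjI).mpr hjσ
      have hne : ¬ i ≡ j [MOD k] := fun h => hji (mem_Icc_mod_inj hjI hi h.symm)
      rcases edge_inter k hk hxi hxj hne with ⟨hcong, hxv⟩ | ⟨hcong, hxv⟩
      · -- σ = {i, i % k + 1}
        have hj_eq : j = i % k + 1 :=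
          mem_Icc_mod_inj hjI (succ_mem_Icc hk hi) (hcong.trans (succ_modeq k i))
        refine ⟨i, hi, ?_⟩
        ext l
        simp only [Finset.mem_insert, Finset.mem_singleton]
        constructor
        · intro hl
          by_cases hli : l = i
          · exact Or.inl hli
          · have hlI := hsub hl
            have hxl : x ∈ ed k l := (hmem l hlI).mpr hl
            have hnel : ¬ i ≡ l [MOD k] := fun h => hli (mem_Icc_mod_inj hlI hi h.symm)
            rcases edge_inter k hk hxi hxl hnel with ⟨hc2, _⟩ | ⟨_, hxv2⟩
            · exact Or.inr (mem_Icc_mod_inj hlI (succ_mem_Icc hk hi)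
                (hc2.trans (succ_modeq k i)))
            · exact absurd (hxv2.symm.trans hxv) (vtx_ne k hk i)
        · rintro (rfl | rfl)
          · exact hiσ
          · exact hj_eq ▸ hjσ
      · -- σ = {j, j % k + 1}, with i = j % k + 1
        have hi_eq : i = j % k + 1 :=
          mem_Icc_mod_inj hi (succ_mem_Icc hk hjI) (hcong.trans (succ_modeq k j))
        refine ⟨j, hjI, ?_⟩
        ext l
        simp only [Finset.mem_insert, Finset.mem_singleton]
        constructor
        · intro hl
          by_cases hlj : l = j
          · exact Or.inl hlj
          · have hlI := hsub hl
            have hxl : x ∈ ed k l := (hmem l hlI).mpr hl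
            have hnel : ¬ j ≡ l [MOD k] := fun h => hlj (mem_Icc_mod_inj hlI hjI h.symm)
            rcases edge_inter k hk hxj hxl hnel with ⟨hc2, _⟩ | ⟨_, hxv2⟩
            · exact Or.inr (mem_Icc_mod_inj hlI (succ_mem_Icc hk hjI)
                (hc2.trans (succ_modeq k j)))
            · -- x = vtx k j, but x = vtx k i = vtx k (j+1)
              exfalso
              have h1 : vtx k i = vtx k (j+1) := vtx_congr hk0 hcong
              exact vtx_ne k hk j (hxv2.symm.trans (hxv.trans h1))
        · rintro (rfl | rfl)
          · exact hjσ
          · exact hi_eq ▸ hiσ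
  · rintro (⟨i, hi, rfl⟩ | ⟨i, hi, rfl⟩)
    · -- singleton {i}
      have hxi : midpoint ℝ (vtx k i) (vtx k (i+1)) ∈ ed k i := midpoint_mem_segment _ _
      refine ⟨Finset.singleton_subset_iff.mpr hi, midpoint ℝ (vtx k i) (vtx k (i+1)), ?_, ?_⟩
      · simp only [Set.mem_iUnion, exists_prop]
        exact ⟨i, hi, hxi⟩
      · intro j hjI
        simp only [Finset.mem_singleton]
        constructor
        · intro hxj
          by_contra hji
          have hne : ¬ i ≡ j [MOD k] := fun h => hji (mem_Icc_mod_inj hi hjI h).symm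
          rcases edge_inter k hk hxi hxj hne with ⟨_, hxv⟩ | ⟨_, hxv⟩
          · exact vtx_ne k hk i ((midpoint_eq_right_iff (R := ℝ)).mp hxv)
          · exact vtx_ne k hk i ((midpoint_eq_left_iff (R := ℝ)).mp hxv)
        · rintro rfl
          exact hxi
    · -- pair {i, i % k + 1}
      have hnI := succ_mem_Icc hk hi
      have hxi : vtx k (i+1) ∈ ed k i := right_mem_segment ℝ _ _
      have hxn : vtx k (i+1) ∈ ed k (i % k + 1) := by
        rw [vtx_congr hk0 (succ_modeq k i)]
        exact left_mem_segment ℝ _ _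
      refine ⟨Finset.insert_subset hi (Finset.singleton_subset_iff.mpr hnI),
        vtx k (i+1), ?_, ?_⟩
      · simp only [Set.mem_iUnion, exists_prop]
        exact ⟨i, hi, hxi⟩
      · intro j hjI
        simp only [Finset.mem_insert, Finset.mem_singleton]
        constructor
        · intro hxj
          by_cases hji : j = i
          · exact Or.inl hji
          have hne : ¬ i ≡ j [MOD k] := fun h => hji (mem_Icc_mod_inj hjI hi h.symm)
          rcases edge_inter k hk hxi hxj hne with ⟨hc2, _⟩ | ⟨_, hxv⟩
          · exact Or.inr (mem_Icc_mod_inj hjI hnI (hc2.trans (succ_modeq k i)))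
          · exact absurd hxv.symm (vtx_ne k hk i)
        · rintro (rfl | rfl)
          · exact hxi
          · exact hxn
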